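/- Combining the previous identities: Let h, c₁,…,c_m, a be twice continuously differentiable, Y : [0,T] → ℝ continuously differentiable with Y(0)=0, ζ(t) ∈ ℝ^{m+2} defined by ζ¹(t)=Y(t)+ζ¹₀, ζ²(t)=ζ²₀−t/2, ζⁱ(t)=ζⁱ₀ (i≥3). Set c•=(h,h²,c), g(t,x)=ζ(t)·c•(x)+β₀, q(t,x)=exp(g(t,x)), and u(t,x)=(1/2)∂ₓa(x)+(1/2)a(x)∂ₓg(t,x). Then q satisfies, for all (t,x): ∂ₜ q(t,x) = −∂ₓ(u(t,x)q(t,x)) + (1/2)∂ₓₓ(a(x)q(t,x)) − (1/2)h(x)²q(t,x) + h(x)q(t,x)Y'(t). -/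

import Mathlib

theorem stmt16 (m : ℕ) (T : ℝ) (hT : 0 < T)
    (h a : ℝ → ℝ) (c : Fin m → ℝ → ℝ)
    (hh : ContDiff ℝ 2 h) (ha : ContDiff ℝ 2 a) (hc : ∀ i, ContDiff ℝ 2 (c i))
    (Y : ℝ → ℝ) (hY : ContDiff ℝ 1 Y) (hY0 : Y 0 = 0)
    (ζ₁₀ ζ₂₀ β₀ : ℝ) (θ₀ : Fin m → ℝ)
    (g : ℝ → ℝ → ℝ) (q : ℝ → ℝ → ℝ) (u : ℝ → ℝ → ℝ)
    (hgdef : ∀ t x, g t x = (Y t + ζ₁₀) * h x + (ζ₂₀ - t / 2) * (h x) ^ 2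
        + (∑ i, θ₀ i * c i x) + β₀)
    (hqdef : ∀ t x, q t x = Real.exp (g t x))
    (hudef : ∀ t x, u t x = (1/2) * deriv a x + (1/2) * a x * deriv (g t) x) :
    ∀ t x : ℝ,
      deriv (fun τ => q τ x) t
        = -deriv (fun ξ => u t ξ * q t ξ) x
          + (1/2) * deriv (deriv (fun ξ => a ξ * q t ξ)) x
          - (1/2) * (h x) ^ 2 * q t x
          + h x * q t x * deriv Y t := by
  intro t x
  have hhd : Differentiable ℝ h := hh.differentiable two_ne_zero
  have had : Differentiable ℝ a := ha.differentiable two_ne_zero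
  have hcd : ∀ i, Differentiable ℝ (c i) := fun i => (hc i).differentiable two_ne_zero
  -- differentiability of g t in space
  have hgt : Differentiable ℝ (g t) := by
    have hge : g t = fun ξ => (Y t + ζ₁₀) * h ξ + (ζ₂₀ - t / 2) * (h ξ) ^ 2
        + (∑ i, θ₀ i * c i ξ) + β₀ := funext (hgdef t)
    rw [hge]
    exact (((hhd.const_mul _).add ((hhd.pow 2).const_mul _)).add
      (Differentiable.fun_sum fun i _ => (hcd i).const_mul _)).add_const β₀
  have hqeq : q t = fun ξ => Real.exp (g t ξ) := funext (hqdef t)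
  have hqt : ∀ ξ, HasDerivAt (q t) (q t ξ * deriv (g t) ξ) ξ := by
    intro ξ
    have := ((hgt ξ).hasDerivAt).exp
    rw [hqeq]
    simpa using this
  have hAQ : ∀ ξ, HasDerivAt (fun ξ' => a ξ' * q t ξ')
      (deriv a ξ * q t ξ + a ξ * (q t ξ * deriv (g t) ξ)) ξ :=
    fun ξ => ((had ξ).hasDerivAt).mul (hqt ξ)
  have key : (fun ξ => u t ξ * q t ξ)
      = fun ξ => (1/2) * deriv (fun ξ' => a ξ' * q t ξ') ξ := by
    funext ξ
    rw [(hAQ ξ).deriv, hudef]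
    ring
  have hD : deriv (fun ξ => u t ξ * q t ξ) x
      = (1/2) * deriv (deriv (fun ξ => a ξ * q t ξ)) x := by
    rw [key, deriv_const_mul_field]
  -- time derivative
  have hYd : HasDerivAt Y (deriv Y t) t := (hY.differentiable one_ne_zero t).hasDerivAt
  have hinner : HasDerivAt
      (fun τ => (Y τ + ζ₁₀) * h x + (ζ₂₀ - τ / 2) * (h x) ^ 2
        + (∑ i, θ₀ i * c i x) + β₀)
      (deriv Y t * h x + (-(1/2)) * (h x) ^ 2) t := by
    have h1 : HasDerivAt (fun τ => (Y τ + ζ₁₀) * h x) (deriv Y t * h x) t :=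
      (hYd.add_const ζ₁₀).mul_const (h x)
    have h2 : HasDerivAt (fun τ => (ζ₂₀ - τ / 2) * (h x) ^ 2)
        ((-(1/2)) * (h x) ^ 2) t := by
      have : HasDerivAt (fun τ : ℝ => ζ₂₀ - τ / 2) (-(1/2)) t := by
        simpa using ((hasDerivAt_id t).div_const 2).const_sub ζ₂₀
      exact this.mul_const _
    exact ((h1.add h2).add_const _).add_const _
  have hQ : HasDerivAt (fun τ => q τ x)
      (q t x * (deriv Y t * h x + (-(1/2)) * (h x) ^ 2)) t := by
    have heq : (fun τ => q τ x) = fun τ => Real.exp ((Y τ + ζ₁₀) * h x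
        + (ζ₂₀ - τ / 2) * (h x) ^ 2 + (∑ i, θ₀ i * c i x) + β₀) := by
      funext τ; rw [hqdef, hgdef]
    rw [heq]
    have := hinner.exp
    rw [← hgdef, ← hqdef] at this
    exact this
  rw [hQ.deriv, hD]
  ring
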